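/- A k-regular graph G on n vertices has at least C(n,3) - (1/2)·n·k·(n-1-k) - (1/6)·n·k·(k-1) cotriangles (independent sets of size 3). -/

import Mathlib

open SimpleGraph Finset

section aux

variable {V : Type*} [Fintype V] [DecidableEq V]

private lemma fiber2 {α β : Type*} [Fintype α] [Fintype β] [DecidableEq α]
    (Q : α → β → Prop) [∀ a, DecidablePred (Q a)] :
    (univ.filter fun q : α × β => Q q.1 q.2).card = ∑ a : α, (univ.filter (Q a)).card := by
  rw [Finset.card_eq_sum_card_fiberwise (f := Prod.fst) (t := univ) (fun q _ => mem_univ _)]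
  refine Finset.sum_congr rfl fun a _ => ?_
  refine Finset.card_nbij' (fun q => q.2) (fun b => (a, b)) ?_ ?_ ?_ ?_
  · rintro ⟨x, y⟩ hq
    simp only [mem_coe, mem_filter, mem_univ, true_and] at hq ⊢
    obtain ⟨h1, h2⟩ := hq
    subst h2; exact h1
  · intro b hb
    simp only [mem_coe, mem_filter, mem_univ, true_and] at hb ⊢
    exact ⟨hb, trivial⟩
  · rintro ⟨x, y⟩ hq
    simp only [mem_coe, mem_filter] at hq
    simp [hq.2]
  · intro b _; rfl

private lemma fiber3 {α β γ : Type*} [Fintype α] [Fintype β] [Fintype γ]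
    [DecidableEq α] [DecidableEq β]
    (P : α → β → Prop) (Q : α → β → γ → Prop)
    [∀ a, DecidablePred (P a)] [∀ a b, DecidablePred (Q a b)] :
    (univ.filter fun p : α × β × γ => P p.1 p.2.1 ∧ Q p.1 p.2.1 p.2.2).card
      = ∑ q ∈ univ.filter (fun q : α × β => P q.1 q.2), (univ.filter (Q q.1 q.2)).card := by
  rw [Finset.card_eq_sum_card_fiberwise (f := fun p : α × β × γ => (p.1, p.2.1))
        (t := univ.filter fun q : α × β => P q.1 q.2)
        (by rintro ⟨a, b, c⟩ hp; simp only [mem_coe, mem_filter, mem_univ, true_and] at hp ⊢; exact hp.1)]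
  refine Finset.sum_congr rfl fun q hq => ?_
  refine Finset.card_nbij' (fun p => p.2.2) (fun c => (q.1, q.2, c)) ?_ ?_ ?_ ?_
  · rintro ⟨a, b, c⟩ hp
    simp only [mem_coe, mem_filter, mem_univ, true_and] at hp ⊢
    obtain ⟨⟨_, h2⟩, h3⟩ := hp
    rw [Prod.ext_iff] at h3
    obtain ⟨h4, h5⟩ := h3
    simp only at h4 h5
    rw [← h4, ← h5]; exact h2
  · intro c hc
    simp only [mem_coe, mem_filter, mem_univ, true_and] at hc ⊢
    refine ⟨⟨?_, hc⟩, trivial⟩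
    simpa using (mem_filter.mp hq).2
  · rintro ⟨a, b, c⟩ hp
    simp only [mem_coe, mem_filter, mem_univ, true_and] at hp
    obtain ⟨_, h3⟩ := hp
    rw [Prod.ext_iff] at h3
    obtain ⟨h4, h5⟩ := h3
    simp only at h4 h5
    simp [← h4, ← h5]
  · intro c _; rfl

private lemma inner_ne (a b : V) (n : ℕ) (hn : Fintype.card V = n) (hab : a ≠ b) :
    (univ.filter fun c : V => c ≠ a ∧ c ≠ b).card = n - 2 := by
  have he : (univ.filter fun c : V => c ≠ a ∧ c ≠ b) = (univ.erase a).erase b := by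
    ext c; simp only [mem_filter, mem_univ, true_and, mem_erase]; tauto
  rw [he, card_erase_of_mem (mem_erase.mpr ⟨hab.symm, mem_univ _⟩),
    card_erase_of_mem (mem_univ _), card_univ, hn]
  omega

variable (G : SimpleGraph V) [DecidableRel G.Adj]

private lemma inner_adj (k : ℕ) (hk : G.IsRegularOfDegree k) (a b : V) (hab : G.Adj a b) :
    (univ.filter fun c : V => G.Adj a c ∧ c ≠ b).card = k - 1 := by
  have he : (univ.filter fun c : V => G.Adj a c ∧ c ≠ b) = (G.neighborFinset a).erase b := by
    ext c; simp only [mem_filter, mem_univ, true_and, mem_erase, mem_neighborFinset]; tauto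
  rw [he, card_erase_of_mem ((mem_neighborFinset _ _ _).mpr hab)]
  rw [show (G.neighborFinset a).card = G.degree a from rfl, hk a]

private lemma card_pairs_adj (n k : ℕ) (hn : Fintype.card V = n) (hk : G.IsRegularOfDegree k) :
    (univ.filter fun q : V × V => G.Adj q.1 q.2).card = n * k := by
  rw [fiber2]
  have : ∀ a : V, (univ.filter (G.Adj a)).card = k := by
    intro a
    have : univ.filter (G.Adj a) = G.neighborFinset a := by
      ext b; simp [mem_neighborFinset]
    rw [this, show (G.neighborFinset a).card = G.degree a from rfl, hk a]
  rw [Finset.sum_congr rfl fun a _ => this a, Finset.sum_const, card_univ, hn, smul_eq_mul]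

private lemma card_pairs_neq (n : ℕ) (hn : Fintype.card V = n) :
    (univ.filter fun q : V × V => q.1 ≠ q.2).card = n * (n - 1) := by
  rw [fiber2 (fun a b : V => a ≠ b)]
  have : ∀ a : V, (univ.filter fun b => a ≠ b).card = n - 1 := by
    intro a
    rw [Finset.filter_ne, card_erase_of_mem (mem_univ _), card_univ, hn]
  rw [Finset.sum_congr rfl fun a _ => this a, Finset.sum_const, card_univ, hn, smul_eq_mul]

private lemma cardS3 (n : ℕ) (hn : Fintype.card V = n) :
    (univ.filter fun p : V × V × V =>
      p.1 ≠ p.2.1 ∧ (p.2.2 ≠ p.1 ∧ p.2.2 ≠ p.2.1)).card = n * (n - 1) * (n - 2) := by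
  rw [fiber3 (fun a b => a ≠ b) (fun a b c => c ≠ a ∧ c ≠ b)]
  rw [Finset.sum_congr rfl fun q hq =>
    inner_ne q.1 q.2 n hn (by simpa using (mem_filter.mp hq).2)]
  rw [Finset.sum_const, card_pairs_neq n hn, smul_eq_mul]

private lemma cardAexp (n k : ℕ) (hn : Fintype.card V = n) (hk : G.IsRegularOfDegree k) :
    (univ.filter fun p : V × V × V =>
      G.Adj p.1 p.2.1 ∧ (p.2.2 ≠ p.1 ∧ p.2.2 ≠ p.2.1)).card = n * k * (n - 2) := by
  rw [fiber3 (fun a b => G.Adj a b) (fun a b c => c ≠ a ∧ c ≠ b)]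
  rw [Finset.sum_congr rfl fun q hq =>
    inner_ne q.1 q.2 n hn (by exact ((mem_filter.mp hq).2).ne)]
  rw [Finset.sum_const, card_pairs_adj G n k hn hk, smul_eq_mul]

private lemma cardACexp (n k : ℕ) (hn : Fintype.card V = n) (hk : G.IsRegularOfDegree k) :
    (univ.filter fun p : V × V × V =>
      G.Adj p.1 p.2.1 ∧ (G.Adj p.2.1 p.2.2 ∧ p.2.2 ≠ p.1)).card = n * k * (k - 1) := by
  rw [fiber3 (fun a b => G.Adj a b) (fun a b c => G.Adj b c ∧ c ≠ a)]
  rw [Finset.sum_congr rfl fun q hq =>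
    inner_adj G k hk q.2 q.1 (((mem_filter.mp hq).2).symm)]
  rw [Finset.sum_const, card_pairs_adj G n k hn hk, smul_eq_mul]

end aux

theorem cotriangle_count_ge
    {V : Type*} [Fintype V] [DecidableEq V]
    (G : SimpleGraph V) [DecidableRel G.Adj]
    (n k : ℕ) (hn : Fintype.card V = n) (hk : G.IsRegularOfDegree k) :
    (n.choose 3 : ℚ) - (1 / 2) * n * k * ((n : ℚ) - 1 - k)
        - (1 / 6) * n * k * ((k : ℚ) - 1) ≤ ((Gᶜ.cliqueFinset 3).card : ℚ) := by
  classical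
  set Sf : Finset (V × V × V) :=
    univ.filter fun p => p.1 ≠ p.2.1 ∧ (p.2.2 ≠ p.1 ∧ p.2.2 ≠ p.2.1) with hSf
  set A : Finset (V × V × V) := Sf.filter fun p => G.Adj p.1 p.2.1 with hA
  set B : Finset (V × V × V) := Sf.filter fun p => G.Adj p.1 p.2.2 with hB
  set C : Finset (V × V × V) := Sf.filter fun p => G.Adj p.2.1 p.2.2 with hC
  set U : Finset (V × V × V) :=
    Sf.filter fun p => G.Adj p.1 p.2.1 ∨ G.Adj p.1 p.2.2 ∨ G.Adj p.2.1 p.2.2 with hU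
  set T : Finset (V × V × V) :=
    Sf.filter fun p => ¬(G.Adj p.1 p.2.1 ∨ G.Adj p.1 p.2.2 ∨ G.Adj p.2.1 p.2.2) with hT
  -- U ∪ T partitions Sf
  have hUT : U.card + T.card = Sf.card :=
    Finset.card_filter_add_card_filter_not _
  -- U = A ∪ B ∪ C
  have hUunion : U = A ∪ (B ∪ C) := by
    rw [hU, hA, hB, hC, Finset.filter_or, Finset.filter_or]
  -- cards of A, B, C
  have hcardA : A.card = n * k * (n - 2) := by
    have : A = univ.filter fun p : V × V × V =>
        G.Adj p.1 p.2.1 ∧ (p.2.2 ≠ p.1 ∧ p.2.2 ≠ p.2.1) := by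
      rw [hA, hSf, Finset.filter_filter]
      ext p
      simp only [mem_filter, mem_univ, true_and]
      constructor
      · rintro ⟨⟨_, h2, h3⟩, h4⟩; exact ⟨h4, h2, h3⟩
      · rintro ⟨h4, h2, h3⟩; exact ⟨⟨h4.ne, h2, h3⟩, h4⟩
    rw [this]; exact cardAexp G n k hn hk
  have hcardB : B.card = n * k * (n - 2) := by
    rw [← cardAexp G n k hn hk]
    refine Finset.card_nbij' (fun p => (p.1, p.2.2, p.2.1)) (fun p => (p.1, p.2.2, p.2.1))
      ?_ ?_ ?_ ?_
    · rintro ⟨a, b, c⟩ hp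
      rw [hB, hSf] at hp
      simp only [mem_coe, mem_filter, mem_univ, true_and] at hp ⊢
      obtain ⟨⟨h1, h2, h3⟩, h4⟩ := hp
      exact ⟨h4, h1.symm, fun h => h3 h.symm⟩
    · rintro ⟨a, b, c⟩ hp
      rw [hB, hSf]
      simp only [mem_coe, mem_filter, mem_univ, true_and] at hp ⊢
      obtain ⟨h1, h2, h3⟩ := hp
      exact ⟨⟨h2.symm, h1.ne', fun h => h3 h.symm⟩, h1⟩
    · rintro ⟨a, b, c⟩ _; rfl
    · rintro ⟨a, b, c⟩ _; rfl
  have hcardC : C.card = n * k * (n - 2) := by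
    rw [← cardAexp G n k hn hk]
    refine Finset.card_nbij' (fun p => (p.2.1, p.2.2, p.1)) (fun p => (p.2.2, p.1, p.2.1))
      ?_ ?_ ?_ ?_
    · rintro ⟨a, b, c⟩ hp
      rw [hC, hSf] at hp
      simp only [mem_coe, mem_filter, mem_univ, true_and] at hp ⊢
      obtain ⟨⟨h1, h2, h3⟩, h4⟩ := hp
      exact ⟨h4, h1, fun h => h2 h.symm⟩
    · rintro ⟨a, b, c⟩ hp
      rw [hC, hSf]
      simp only [mem_coe, mem_filter, mem_univ, true_and] at hp ⊢
      obtain ⟨h1, h2, h3⟩ := hp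
      exact ⟨⟨h2, fun h => h3 h.symm, h1.ne'⟩, h1⟩
    · rintro ⟨a, b, c⟩ _; rfl
    · rintro ⟨a, b, c⟩ _; rfl
  -- cards of A ∩ C and B ∩ C
  have hcardAC : (A ∩ C).card = n * k * (k - 1) := by
    have : A ∩ C = univ.filter fun p : V × V × V =>
        G.Adj p.1 p.2.1 ∧ (G.Adj p.2.1 p.2.2 ∧ p.2.2 ≠ p.1) := by
      rw [hA, hC, ← Finset.filter_and, hSf, Finset.filter_filter]
      ext p
      simp only [mem_filter, mem_univ, true_and]
      constructor
      · rintro ⟨⟨_, h2, _⟩, h4, h5⟩; exact ⟨h4, h5, h2⟩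
      · rintro ⟨h4, h5, h2⟩; exact ⟨⟨h4.ne, h2, h5.ne'⟩, h4, h5⟩
    rw [this]; exact cardACexp G n k hn hk
  have hcardBC : (B ∩ C).card = n * k * (k - 1) := by
    rw [← cardACexp G n k hn hk]
    refine Finset.card_nbij' (fun p => (p.1, p.2.2, p.2.1)) (fun p => (p.1, p.2.2, p.2.1))
      ?_ ?_ ?_ ?_
    · rintro ⟨a, b, c⟩ hp
      rw [Finset.mem_coe, Finset.mem_inter, hB, hC, hSf] at hp
      simp only [mem_coe, mem_filter, mem_univ, true_and] at hp ⊢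
      obtain ⟨⟨⟨h1, h2, h3⟩, h4⟩, ⟨_, h5⟩⟩ := hp
      exact ⟨h4, h5.symm, h1.symm⟩
    · rintro ⟨a, b, c⟩ hp
      rw [Finset.mem_coe, Finset.mem_inter, hB, hC, hSf]
      simp only [mem_coe, mem_filter, mem_univ, true_and] at hp ⊢
      obtain ⟨h1, h2, h3⟩ := hp
      exact ⟨⟨⟨h3.symm, h1.ne', h2.ne⟩, h1⟩, ⟨h3.symm, h1.ne', h2.ne⟩, h2.symm⟩
    · rintro ⟨a, b, c⟩ _; rfl
    · rintro ⟨a, b, c⟩ _; rfl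
  -- inclusion-exclusion style bound
  have hle : U.card + (A ∩ C).card + (B ∩ C).card ≤ A.card + B.card + C.card := by
    have h1 := Finset.card_union_add_card_inter (A ∪ B) C
    have h2 := Finset.card_union_add_card_inter A B
    have h3 := Finset.card_union_add_card_inter (A ∩ C) (B ∩ C)
    have h4 : (A ∩ C) ∪ (B ∩ C) = (A ∪ B) ∩ C := (Finset.union_inter_distrib_right A B C).symm
    have h5 : ((A ∩ C) ∩ (B ∩ C)).card ≤ (A ∩ B).card := by
      apply Finset.card_le_card
      intro x hx
      simp only [Finset.mem_inter] at hx ⊢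
      tauto
    rw [h4] at h3
    rw [hUunion, ← Finset.union_assoc]
    omega
  -- card of Sf
  have hcardS : Sf.card = n * (n - 1) * (n - 2) := by
    rw [hSf]; exact cardS3 n hn
  -- card of T = 6 * number of cotriangles
  have hcardT : T.card = 6 * (Gᶜ.cliqueFinset 3).card := by
    rw [Finset.card_eq_sum_card_fiberwise
      (f := fun p : V × V × V => ({p.1, p.2.1, p.2.2} : Finset V))
      (t := Gᶜ.cliqueFinset 3) ?hmem]
    case hmem =>
      rintro ⟨a, b, c⟩ hp
      rw [hT, hSf] at hp
      simp only [mem_coe, mem_filter, mem_univ, true_and] at hp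
      obtain ⟨⟨h1, h2, h3⟩, h4⟩ := hp
      push_neg at h4
      obtain ⟨n1, n2, n3⟩ := h4
      rw [mem_coe, mem_cliqueFinset_iff, is3Clique_triple_iff]
      exact ⟨(G.compl_adj _ _).mpr ⟨h1, n1⟩, (G.compl_adj _ _).mpr ⟨fun h => h2 h.symm, n2⟩,
        (G.compl_adj _ _).mpr ⟨fun h => h3 h.symm, n3⟩⟩
    rw [Finset.sum_congr rfl ?hfib, Finset.sum_const, smul_eq_mul, mul_comm]
    case hfib =>
      intro s hs
      have hclique := (mem_cliqueFinset_iff.mp hs).1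
      have hscard : s.card = 3 := (mem_cliqueFinset_iff.mp hs).card_eq
      have hfe : T.filter (fun p => ({p.1, p.2.1, p.2.2} : Finset V) = s)
          = univ.filter fun p : V × V × V =>
            (p.1 ∈ s ∧ p.2.1 ∈ s ∧ p.1 ≠ p.2.1) ∧ (p.2.2 ∈ s ∧ p.2.2 ≠ p.1 ∧ p.2.2 ≠ p.2.1) := by
        ext ⟨a, b, c⟩
        rw [Finset.mem_filter, hT, hSf]
        simp only [mem_filter, mem_univ, true_and]
        constructor
        · rintro ⟨⟨⟨h1, h2, h3⟩, _⟩, hset⟩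
          rw [← hset]
          refine ⟨⟨?_, ?_, h1⟩, ?_, h2, h3⟩ <;> simp
        · rintro ⟨⟨m1, m2, h1⟩, m3, h2, h3⟩
          have hsub : ({a, b, c} : Finset V) ⊆ s := by
            intro x hx
            simp only [mem_insert, mem_singleton] at hx
            rcases hx with rfl | rfl | rfl <;> assumption
          have hc3 : ({a, b, c} : Finset V).card = 3 := by
            rw [Finset.card_insert_of_notMem (by
                simp only [mem_insert, mem_singleton]
                rintro (rfl | rfl)
                exacts [h1 rfl, h2 rfl]),
              Finset.card_insert_of_notMem (by
                simp only [mem_singleton]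
                exact fun h => h3 h.symm),
              Finset.card_singleton]
          refine ⟨⟨⟨h1, h2, h3⟩, ?_⟩, ?_⟩
          · rintro (h | h | h)
            · exact ((G.compl_adj _ _).mp (hclique (Finset.mem_coe.mpr m1) (Finset.mem_coe.mpr m2) h1)).2 h
            · exact ((G.compl_adj _ _).mp (hclique (Finset.mem_coe.mpr m1) (Finset.mem_coe.mpr m3) (fun hh => h2 hh.symm))).2 h
            · exact ((G.compl_adj _ _).mp (hclique (Finset.mem_coe.mpr m2) (Finset.mem_coe.mpr m3) (fun hh => h3 hh.symm))).2 h
          · exact Finset.eq_of_subset_of_card_le hsub (by omega)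
      rw [hfe, fiber3 (fun a b => a ∈ s ∧ b ∈ s ∧ a ≠ b) (fun a b c => c ∈ s ∧ c ≠ a ∧ c ≠ b)]
      have hinner : ∀ q ∈ univ.filter (fun q : V × V => q.1 ∈ s ∧ q.2 ∈ s ∧ q.1 ≠ q.2),
          (univ.filter fun c => c ∈ s ∧ c ≠ q.1 ∧ c ≠ q.2).card = 1 := by
        rintro ⟨a, b⟩ hq
        simp only [mem_filter, mem_univ, true_and] at hq
        obtain ⟨m1, m2, h1⟩ := hq
        have : (univ.filter fun c => c ∈ s ∧ c ≠ a ∧ c ≠ b) = (s.erase a).erase b := by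
          ext c; simp only [mem_filter, mem_univ, true_and, mem_erase]; tauto
        rw [this, card_erase_of_mem (mem_erase.mpr ⟨h1.symm, m2⟩),
          card_erase_of_mem m1, hscard]
      rw [Finset.sum_congr rfl hinner, Finset.sum_const, smul_eq_mul, mul_one]
      -- count ordered pairs of distinct elements of s
      rw [fiber2 (fun a b : V => a ∈ s ∧ b ∈ s ∧ a ≠ b)]
      have hpair : ∀ a : V, (univ.filter fun b => a ∈ s ∧ b ∈ s ∧ a ≠ b).card
          = if a ∈ s then 2 else 0 := by
        intro a
        by_cases ha : a ∈ s
        · have : (univ.filter fun b => a ∈ s ∧ b ∈ s ∧ a ≠ b) = s.erase a := by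
            ext b
            simp only [mem_filter, mem_univ, true_and, mem_erase, ha, true_and]
            tauto
          rw [this, card_erase_of_mem ha, hscard, if_pos ha]
        · rw [if_neg ha]
          simp [Finset.filter_eq_empty_iff, ha]
      rw [Finset.sum_congr rfl fun a _ => hpair a, Finset.sum_ite_mem,
        Finset.univ_inter, Finset.sum_const, hscard, smul_eq_mul]
  -- bridge to ℚ
  have hnk : 2 ≤ n ∨ k = 0 ∨ n = 0 := by
    rcases Nat.lt_or_ge n 2 with h | h
    · interval_cases n
      · right; right; rfl
      · right; left
        have hne : Nonempty V := Fintype.card_pos_iff.mp (by omega)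
        obtain ⟨v⟩ := hne
        have hd := G.degree_lt_card_verts v
        rw [hk v, hn] at hd
        omega
    · left; exact h
  have c1 : ((n * (n - 1) * (n - 2) : ℕ) : ℚ) = n * ((n : ℚ) - 1) * ((n : ℚ) - 2) := by
    rcases n with _ | _ | m
    · norm_num
    · norm_num
    · have e1 : m + 2 - 1 = m + 1 := by omega
      have e2 : m + 2 - 2 = m := by omega
      rw [e1, e2]; push_cast; ring
  have c2 : ((n * k * (k - 1) : ℕ) : ℚ) = n * k * ((k : ℚ) - 1) := by
    rcases k with _ | m
    · norm_num
    · have e1 : m + 1 - 1 = m := by omega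
      rw [e1]; push_cast; ring
  have c3 : ((n * k * (n - 2) : ℕ) : ℚ) = n * k * ((n : ℚ) - 2) := by
    rcases hnk with h | h | h
    · obtain ⟨m, rfl⟩ : ∃ m, n = m + 2 := ⟨n - 2, by omega⟩
      have e1 : m + 2 - 2 = m := by omega
      rw [e1]; push_cast; ring
    · subst h; norm_num
    · subst h; norm_num
  -- final arithmetic
  have hle' : U.card + 2 * (n * k * (k - 1)) ≤ 3 * (n * k * (n - 2)) := by
    rw [hcardA, hcardB, hcardC] at hle
    rw [hcardAC, hcardBC] at hle
    omega
  have e3 : (U.card : ℚ) + 2 * ((n : ℚ) * k * ((k : ℚ) - 1))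
      ≤ 3 * ((n : ℚ) * k * ((n : ℚ) - 2)) := by
    rw [← c2, ← c3]
    exact_mod_cast hle'
  have e2 : (U.card : ℚ) + (T.card : ℚ) = n * ((n : ℚ) - 1) * ((n : ℚ) - 2) := by
    rw [← c1]
    exact_mod_cast hUT.trans hcardS
  have e1 : (T.card : ℚ) = 6 * ((Gᶜ.cliqueFinset 3).card : ℚ) := by
    exact_mod_cast hcardT
  have hch3 : (n.choose 3 : ℚ) * 6 = n * ((n : ℚ) - 1) * ((n : ℚ) - 2) := by
    clear * -
    induction n with
    | zero => norm_num
    | succ m ih =>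
      rw [Nat.choose_succ_succ]
      push_cast
      have h2 : ((m.choose 2 : ℕ) : ℚ) = m * ((m : ℚ) - 1) / 2 := Nat.cast_choose_two (K := ℚ) m
      rw [h2]
      push_cast at ih
      ring_nf
      ring_nf at ih
      linarith
  have hring : (n : ℚ) * k * ((n : ℚ) - 2)
      = (n : ℚ) * k * ((n : ℚ) - 1 - k) + (n : ℚ) * k * ((k : ℚ) - 1) := by ring
  linarith
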